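/- Let G be a minimal I-map of a strictly positive distribution P on {0,1}^d. Then for every node X_k and every ancestral set A of G with pa(k) \ A ≠ ∅, the conditional mutual information satisfies I(X_k; pa(k) | A) > 0. -/

import Mathlib

open scoped Classical BigOperators
open Finset

noncomputable section

/-- Probability of an event under a mass function on a finite sample space. -/
def prE {Ω : Type*} [Fintype Ω] (p : Ω → ℝ) (s : Set Ω) : ℝ :=
  ∑ ω, if ω ∈ s then p ω else 0

/-- Conditional probability P(s | t). -/
def condPr {Ω : Type*} [Fintype Ω] (p : Ω → ℝ) (s t : Set Ω) : ℝ :=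
  prE p (s ∩ t) / prE p t

/-- Independence of two random variables. -/
def IndepRV {Ω α β : Type*} [Fintype Ω] (p : Ω → ℝ) (X : Ω → α) (Y : Ω → β) : Prop :=
  ∀ a b, prE p {ω | X ω = a ∧ Y ω = b} = prE p {ω | X ω = a} * prE p {ω | Y ω = b}

/-- Conditional independence of X and Y given Z (cross-multiplied form). -/
def CondIndepRV {Ω α β γ : Type*} [Fintype Ω] (p : Ω → ℝ)
    (X : Ω → α) (Y : Ω → β) (Z : Ω → γ) : Prop :=
  ∀ a b c,
    prE p {ω | X ω = a ∧ Y ω = b ∧ Z ω = c} * prE p {ω | Z ω = c} =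
      prE p {ω | X ω = a ∧ Z ω = c} * prE p {ω | Y ω = b ∧ Z ω = c}

/-- Shannon entropy of a finitely-supported random variable. -/
def entH {Ω α : Type*} [Fintype Ω] [Fintype α] (p : Ω → ℝ) (X : Ω → α) : ℝ :=
  -∑ a : α, prE p {ω | X ω = a} * Real.log (prE p {ω | X ω = a})

/-- Conditional entropy H(X | Y). -/
def condEnt {Ω α β : Type*} [Fintype Ω] [Fintype α] [Fintype β]
    (p : Ω → ℝ) (X : Ω → α) (Y : Ω → β) : ℝ :=
  entH p (fun ω => (X ω, Y ω)) - entH p Y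

/-- Mutual information I(X;Y). -/
def mutInfo {Ω α β : Type*} [Fintype Ω] [Fintype α] [Fintype β]
    (p : Ω → ℝ) (X : Ω → α) (Y : Ω → β) : ℝ :=
  entH p X + entH p Y - entH p (fun ω => (X ω, Y ω))

/-- Conditional mutual information I(X;Y | Z). -/
def condMI {Ω α β γ : Type*} [Fintype Ω] [Fintype α] [Fintype β] [Fintype γ]
    (p : Ω → ℝ) (X : Ω → α) (Y : Ω → β) (Z : Ω → γ) : ℝ :=
  entH p (fun ω => (X ω, Z ω)) + entH p (fun ω => (Y ω, Z ω)) -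
    entH p (fun ω => (X ω, Y ω, Z ω)) - entH p Z

/-- The parent set of `k` in the directed graph `E`. -/
def paF {d : ℕ} (E : Fin d → Fin d → Prop) (k : Fin d) : Finset (Fin d) :=
  Finset.univ.filter (fun i => E i k)

/-- The restriction of a configuration to a subset of coordinates, as a random variable. -/
def restr {d : ℕ} {β : Type*} (s : Finset (Fin d)) : (Fin d → β) → (↥s → β) :=
  fun x i => x i.1

/-- `P` factorizes over the DAG with edge relation `E`:
there are nonnegative Markov kernels, each depending only on the parent coordinates,
whose product is `p`. -/
def Factorizes {d : ℕ} {β : Type*} [Fintype β] (E : Fin d → Fin d → Prop)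
    (p : (Fin d → β) → ℝ) : Prop :=
  ∃ f : Fin d → β → (Fin d → β) → ℝ,
    (∀ k b x, 0 ≤ f k b x) ∧ (∀ k x, ∑ b, f k b x = 1) ∧
    (∀ k b x y, (∀ j, E j k → x j = y j) → f k b x = f k b y) ∧
    (∀ x, p x = ∏ k, f k (x k) x)

/-- Ancestral sets of the layer decomposition: `Aset E j` is the union of the first `j`
layers, i.e. `Aset E (j+1)` consists of all nodes whose parents all lie in `Aset E j`. -/
def Aset {d : ℕ} (E : Fin d → Fin d → Prop) : ℕ → Finset (Fin d)
  | 0 => ∅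
  | (j+1) => Finset.univ.filter (fun k => ∀ i, E i k → i ∈ Aset E j)

section PR
variable {Ω : Type*} [Fintype Ω] (p : Ω → ℝ)

lemma prE_congr {s t : Set Ω} (h : ∀ ω, ω ∈ s ↔ ω ∈ t) : prE p s = prE p t := by
  unfold prE; exact Finset.sum_congr rfl fun ω _ => if_congr (h ω) rfl rfl

lemma prE_eq_sum (s : Set Ω) (t : Finset Ω) (h : ∀ ω, ω ∈ s ↔ ω ∈ t) :
    prE p s = ∑ y ∈ t, p y := by
  classical
  calc prE p s = ∑ ω, if ω ∈ t then p ω else 0 :=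
        Finset.sum_congr rfl fun ω _ => if_congr (h ω) rfl rfl
    _ = ∑ y ∈ Finset.univ ∩ t, p y := Finset.sum_ite_mem _ _ _
    _ = ∑ y ∈ t, p y := by rw [Finset.univ_inter]

lemma prE_nonneg (hp : ∀ ω, 0 ≤ p ω) (s : Set Ω) : 0 ≤ prE p s := by
  apply Finset.sum_nonneg; intro ω _; split
  · exact hp ω
  · exact le_refl 0

lemma prE_mono (hp : ∀ ω, 0 ≤ p ω) {s t : Set Ω} (h : s ⊆ t) : prE p s ≤ prE p t := by
  apply Finset.sum_le_sum; intro ω _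
  by_cases hs : ω ∈ s
  · simp [hs, h hs]
  · simp only [hs, if_false]; split
    · exact hp ω
    · exact le_refl 0

lemma prE_pos (hp : ∀ ω, 0 < p ω) {s : Set Ω} (hs : s.Nonempty) : 0 < prE p s := by
  obtain ⟨ω₀, h₀⟩ := hs
  have h1 := Finset.single_le_sum (f := fun ω => if ω ∈ s then p ω else 0)
    (fun ω _ => by split; exacts [(hp ω).le, le_refl 0]) (Finset.mem_univ ω₀)
  simp only [h₀, if_true] at h1
  exact lt_of_lt_of_le (hp ω₀) h1

lemma prE_marg {α : Type*} [Fintype α] (X : Ω → α) (R : Ω → Prop) :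
    ∑ a, prE p {ω | X ω = a ∧ R ω} = prE p {ω | R ω} := by
  unfold prE
  rw [Finset.sum_comm]
  refine Finset.sum_congr rfl (fun ω _ => ?_)
  simp only [Set.mem_setOf_eq]
  by_cases hR : R ω
  · simp only [hR, and_true]
    rw [Finset.sum_ite_eq univ (X ω) (fun _ => p ω)]
    simp
  · simp [hR]

lemma prE_marg2 {α : Type*} [Fintype α] (X : Ω → α) (Q R : Ω → Prop) :
    ∑ a, prE p {ω | Q ω ∧ X ω = a ∧ R ω} = prE p {ω | Q ω ∧ R ω} := by
  have h1 : ∀ a, prE p {ω | Q ω ∧ X ω = a ∧ R ω} = prE p {ω | X ω = a ∧ (Q ω ∧ R ω)} :=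
    fun a => prE_congr p (fun ω => by simp only [Set.mem_setOf_eq]; tauto)
  simp_rw [h1]; exact prE_marg p X _

lemma prE_marg3 {α : Type*} [Fintype α] (X : Ω → α) (Q : Ω → Prop) :
    ∑ a, prE p {ω | Q ω ∧ X ω = a} = prE p {ω | Q ω} := by
  have h1 : ∀ a, prE p {ω | Q ω ∧ X ω = a} = prE p {ω | X ω = a ∧ Q ω} :=
    fun a => prE_congr p (fun ω => by simp only [Set.mem_setOf_eq]; tauto)
  simp_rw [h1]; exact prE_marg p X _

end PR

section CMI
variable {Ω α β γ : Type*} [Fintype Ω] [Fintype α] [Fintype β] [Fintype γ]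
variable (p : Ω → ℝ) (X : Ω → α) (Y : Ω → β) (Z : Ω → γ)

lemma condMI_eq_sum :
    condMI p X Y Z = ∑ a, ∑ b, ∑ c,
      prE p {ω | X ω = a ∧ Y ω = b ∧ Z ω = c} *
        (Real.log (prE p {ω | X ω = a ∧ Y ω = b ∧ Z ω = c})
         + Real.log (prE p {ω | Z ω = c})
         - Real.log (prE p {ω | X ω = a ∧ Z ω = c})
         - Real.log (prE p {ω | Y ω = b ∧ Z ω = c})) := by
  set Pabc : α → β → γ → ℝ := fun a b c => prE p {ω | X ω = a ∧ Y ω = b ∧ Z ω = c} with hPabc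
  set Pac : α → γ → ℝ := fun a c => prE p {ω | X ω = a ∧ Z ω = c} with hPac
  set Pbc : β → γ → ℝ := fun b c => prE p {ω | Y ω = b ∧ Z ω = c} with hPbc
  set Pc : γ → ℝ := fun c => prE p {ω | Z ω = c} with hPc
  have hb : ∀ a c, ∑ b, Pabc a b c = Pac a c := by
    intro a c
    have := prE_marg2 p Y (fun ω => X ω = a) (fun ω => Z ω = c)
    simpa using this
  have ha : ∀ b c, ∑ a, Pabc a b c = Pbc b c := by
    intro b c
    have := prE_marg p X (fun ω => Y ω = b ∧ Z ω = c)
    simpa using this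
  have hac : ∀ c, ∑ a, Pac a c = Pc c := by
    intro c
    have := prE_marg p X (fun ω => Z ω = c)
    simpa using this
  -- rewrite the entropies
  have h1 : entH p (fun ω => (X ω, Z ω)) = -∑ a, ∑ c, Pac a c * Real.log (Pac a c) := by
    unfold entH
    rw [Fintype.sum_prod_type]
    congr 1
    refine Finset.sum_congr rfl fun a _ => Finset.sum_congr rfl fun c _ => ?_
    have : prE p {ω | (X ω, Z ω) = (a, c)} = Pac a c :=
      prE_congr p (fun ω => by simp [Prod.ext_iff])
    rw [this]
  have h2 : entH p (fun ω => (Y ω, Z ω)) = -∑ b, ∑ c, Pbc b c * Real.log (Pbc b c) := by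
    unfold entH
    rw [Fintype.sum_prod_type]
    congr 1
    refine Finset.sum_congr rfl fun b _ => Finset.sum_congr rfl fun c _ => ?_
    have : prE p {ω | (Y ω, Z ω) = (b, c)} = Pbc b c :=
      prE_congr p (fun ω => by simp [Prod.ext_iff])
    rw [this]
  have h3 : entH p (fun ω => (X ω, Y ω, Z ω)) =
      -∑ a, ∑ b, ∑ c, Pabc a b c * Real.log (Pabc a b c) := by
    unfold entH
    rw [Fintype.sum_prod_type]
    congr 1
    refine Finset.sum_congr rfl fun a _ => ?_
    rw [Fintype.sum_prod_type]
    refine Finset.sum_congr rfl fun b _ => Finset.sum_congr rfl fun c _ => ?_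
    have : prE p {ω | (X ω, Y ω, Z ω) = (a, b, c)} = Pabc a b c :=
      prE_congr p (fun ω => by simp [Prod.ext_iff])
    rw [this]
  have h4 : entH p Z = -∑ c, Pc c * Real.log (Pc c) := rfl
  -- main sum identities
  have e1 : ∑ a, ∑ b, ∑ c, Pabc a b c * Real.log (Pac a c)
      = ∑ a, ∑ c, Pac a c * Real.log (Pac a c) := by
    refine Finset.sum_congr rfl fun a _ => ?_
    rw [Finset.sum_comm]
    refine Finset.sum_congr rfl fun c _ => ?_
    rw [← Finset.sum_mul, hb]
  have e2 : ∑ a, ∑ b, ∑ c, Pabc a b c * Real.log (Pbc b c)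
      = ∑ b, ∑ c, Pbc b c * Real.log (Pbc b c) := by
    rw [Finset.sum_comm]
    refine Finset.sum_congr rfl fun b _ => ?_
    rw [Finset.sum_comm]
    refine Finset.sum_congr rfl fun c _ => ?_
    rw [← Finset.sum_mul, ha]
  have e3 : ∑ a, ∑ b, ∑ c, Pabc a b c * Real.log (Pc c)
      = ∑ c, Pc c * Real.log (Pc c) := by
    have : ∀ a, ∑ b, ∑ c, Pabc a b c * Real.log (Pc c)
        = ∑ c, Pac a c * Real.log (Pc c) := by
      intro a
      rw [Finset.sum_comm]
      refine Finset.sum_congr rfl fun c _ => ?_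
      rw [← Finset.sum_mul, hb]
    simp_rw [this]
    rw [Finset.sum_comm]
    refine Finset.sum_congr rfl fun c _ => ?_
    rw [← Finset.sum_mul, hac]
  have expand : ∑ a, ∑ b, ∑ c,
      Pabc a b c * (Real.log (Pabc a b c) + Real.log (Pc c)
        - Real.log (Pac a c) - Real.log (Pbc b c))
      = (∑ a, ∑ b, ∑ c, Pabc a b c * Real.log (Pabc a b c))
        + (∑ a, ∑ b, ∑ c, Pabc a b c * Real.log (Pc c))
        - (∑ a, ∑ b, ∑ c, Pabc a b c * Real.log (Pac a c))
        - (∑ a, ∑ b, ∑ c, Pabc a b c * Real.log (Pbc b c)) := by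
    rw [← Finset.sum_add_distrib, ← Finset.sum_sub_distrib, ← Finset.sum_sub_distrib]
    refine Finset.sum_congr rfl fun a _ => ?_
    rw [← Finset.sum_add_distrib, ← Finset.sum_sub_distrib, ← Finset.sum_sub_distrib]
    refine Finset.sum_congr rfl fun b _ => ?_
    rw [← Finset.sum_add_distrib, ← Finset.sum_sub_distrib, ← Finset.sum_sub_distrib]
    refine Finset.sum_congr rfl fun c _ => ?_
    ring
  rw [condMI, h1, h2, h3, h4, expand, e1, e2, e3]
  ring

end CMI

section CMI2
variable {Ω α β γ : Type*} [Fintype Ω] [Fintype α] [Fintype β] [Fintype γ]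
variable (p : Ω → ℝ) (X : Ω → α) (Y : Ω → β) (Z : Ω → γ)

lemma condMI_le_zero_ci (hp : ∀ ω, 0 < p ω) (hsum : ∑ ω, p ω = 1)
    (hZ : ∀ c, ∃ ω, Z ω = c) (h : condMI p X Y Z ≤ 0) :
    ∀ a b c,
      prE p {ω | X ω = a ∧ Y ω = b ∧ Z ω = c} * prE p {ω | Z ω = c} =
        prE p {ω | X ω = a ∧ Z ω = c} * prE p {ω | Y ω = b ∧ Z ω = c} := by
  classical
  set Pabc : α → β → γ → ℝ := fun a b c => prE p {ω | X ω = a ∧ Y ω = b ∧ Z ω = c} with hPabc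
  set Pac : α → γ → ℝ := fun a c => prE p {ω | X ω = a ∧ Z ω = c} with hPac
  set Pbc : β → γ → ℝ := fun b c => prE p {ω | Y ω = b ∧ Z ω = c} with hPbc
  set Pc : γ → ℝ := fun c => prE p {ω | Z ω = c} with hPc
  have hb : ∀ a c, ∑ b, Pabc a b c = Pac a c := by
    intro a c; simpa using prE_marg2 p Y (fun ω => X ω = a) (fun ω => Z ω = c)
  have ha : ∀ b c, ∑ a, Pabc a b c = Pbc b c := by
    intro b c; simpa using prE_marg p X (fun ω => Y ω = b ∧ Z ω = c)
  have hac : ∀ c, ∑ a, Pac a c = Pc c := by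
    intro c; simpa using prE_marg p X (fun ω => Z ω = c)
  have hbc : ∀ c, ∑ b, Pbc b c = Pc c := by
    intro c; simpa using prE_marg p Y (fun ω => Z ω = c)
  have hcsum : ∑ c, Pc c = 1 := by
    have h1 := prE_marg p Z (fun _ => True)
    have h2 : prE p {ω | True} = 1 := by
      rw [← hsum]; unfold prE; simp
    rw [← h2, ← h1]
    refine Finset.sum_congr rfl fun c _ => prE_congr p fun ω => by simp
  have hPcpos : ∀ c, 0 < Pc c := fun c => by
    obtain ⟨ω, hω⟩ := hZ c
    exact prE_pos p hp ⟨ω, hω⟩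
  have hPabcnn : ∀ a b c, 0 ≤ Pabc a b c := fun a b c => prE_nonneg p (fun ω => (hp ω).le) _
  have hPacnn : ∀ a c, 0 ≤ Pac a c := fun a c => prE_nonneg p (fun ω => (hp ω).le) _
  have hPbcnn : ∀ b c, 0 ≤ Pbc b c := fun b c => prE_nonneg p (fun ω => (hp ω).le) _
  have hmono1 : ∀ a b c, Pabc a b c ≤ Pac a c := fun a b c =>
    prE_mono p (fun ω => (hp ω).le) (fun ω hω => ⟨hω.1, hω.2.2⟩)
  have hmono2 : ∀ a b c, Pabc a b c ≤ Pbc b c := fun a b c =>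
    prE_mono p (fun ω => (hp ω).le) (fun ω hω => ⟨hω.2.1, hω.2.2⟩)
  set F : α × β × γ → ℝ := fun x =>
    Pabc x.1 x.2.1 x.2.2 * (Real.log (Pabc x.1 x.2.1 x.2.2) + Real.log (Pc x.2.2)
      - Real.log (Pac x.1 x.2.2) - Real.log (Pbc x.2.1 x.2.2)) with hF
  set G : α × β × γ → ℝ := fun x =>
    Pabc x.1 x.2.1 x.2.2 - Pac x.1 x.2.2 * Pbc x.2.1 x.2.2 / Pc x.2.2 with hG
  have key : ∀ x : α × β × γ, G x ≤ F x ∧ (F x = G x →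
      Pabc x.1 x.2.1 x.2.2 * Pc x.2.2 = Pac x.1 x.2.2 * Pbc x.2.1 x.2.2) := by
    rintro ⟨a, b, c⟩
    rcases eq_or_lt_of_le (hPabcnn a b c) with h0 | h0
    · have eqF : F (a, b, c) = 0 := by simp [hF, ← h0]
      have eqG : G (a, b, c) = -(Pac a c * Pbc b c / Pc c) := by simp [hG, ← h0]
      have hqnn : 0 ≤ Pac a c * Pbc b c / Pc c :=
        div_nonneg (mul_nonneg (hPacnn a c) (hPbcnn b c)) (hPcpos c).le
      constructor
      · rw [eqF, eqG]; linarith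
      · intro hFG
        rw [eqF, eqG] at hFG
        have hq0 : Pac a c * Pbc b c / Pc c = 0 := by linarith
        have : Pac a c * Pbc b c = 0 := by
          field_simp [(hPcpos c).ne'] at hq0; rw [mul_zero] at hq0; exact hq0
        simp only [← h0, zero_mul]
        exact this.symm
    · have hacpos : 0 < Pac a c := lt_of_lt_of_le h0 (hmono1 a b c)
      have hbcpos : 0 < Pbc b c := lt_of_lt_of_le h0 (hmono2 a b c)
      have hdenpos : 0 < Pc c * Pabc a b c := mul_pos (hPcpos c) h0
      set r : ℝ := Pac a c * Pbc b c / (Pc c * Pabc a b c) with hr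
      have hrpos : 0 < r := div_pos (mul_pos hacpos hbcpos) hdenpos
      have hlogr : Real.log r = Real.log (Pac a c) + Real.log (Pbc b c)
          - Real.log (Pc c) - Real.log (Pabc a b c) := by
        rw [hr, Real.log_div (mul_pos hacpos hbcpos).ne' hdenpos.ne',
          Real.log_mul hacpos.ne' hbcpos.ne', Real.log_mul (hPcpos c).ne' h0.ne']
        ring
      have hFr : F (a, b, c) = Pabc a b c * (-Real.log r) := by
        simp only [hF, hlogr]; ring
      have hGr : G (a, b, c) = Pabc a b c * (1 - r) := by
        have hcancel : Pabc a b c * r = Pac a c * Pbc b c / Pc c := by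
          rw [hr]; field_simp [h0.ne', (hPcpos c).ne']
        simp only [hG]
        rw [mul_sub, mul_one, hcancel]
      constructor
      · rw [hFr, hGr]
        exact mul_le_mul_of_nonneg_left
          (by linarith [Real.log_le_sub_one_of_pos hrpos]) h0.le
      · intro hFG
        rw [hFr, hGr] at hFG
        by_cases hr1 : r = 1
        · rw [hr] at hr1
          have h2 : Pac a c * Pbc b c = Pc c * Pabc a b c :=
            (div_eq_one_iff_eq hdenpos.ne').mp hr1
          linear_combination -h2
        · exfalso
          have hlt := Real.log_lt_sub_one_of_pos hrpos hr1
          have := mul_lt_mul_of_pos_left (show (1 : ℝ) - r < -Real.log r by linarith) h0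
          linarith
  -- sums of F and G
  have hsumF : ∑ x : α × β × γ, F x = condMI p X Y Z := by
    rw [condMI_eq_sum p X Y Z]
    rw [Fintype.sum_prod_type]
    refine Finset.sum_congr rfl fun a _ => ?_
    rw [Fintype.sum_prod_type]
  have hsumG : ∑ x : α × β × γ, G x = 0 := by
    have hG1 : ∑ x : α × β × γ, Pabc x.1 x.2.1 x.2.2 = 1 := by
      rw [Fintype.sum_prod_type]
      simp_rw [Fintype.sum_prod_type]
      have : ∀ a : α, ∑ b, ∑ c, Pabc a b c = ∑ c, Pac a c := by
        intro a; rw [Finset.sum_comm]; exact Finset.sum_congr rfl fun c _ => hb a c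
      simp_rw [this]
      rw [Finset.sum_comm]
      simp_rw [hac, hcsum]
    have hG2 : ∑ x : α × β × γ, Pac x.1 x.2.2 * Pbc x.2.1 x.2.2 / Pc x.2.2 = 1 := by
      rw [Fintype.sum_prod_type]
      simp_rw [Fintype.sum_prod_type]
      have e : ∀ (a : α) (c : γ), ∑ b, Pac a c * Pbc b c / Pc c = Pac a c := by
        intro a c
        have e1 : ∑ b, Pac a c * Pbc b c / Pc c = (Pac a c / Pc c) * ∑ b, Pbc b c := by
          rw [Finset.mul_sum]; exact Finset.sum_congr rfl fun b _ => by ring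
        rw [e1, hbc c, div_mul_cancel₀ _ (hPcpos c).ne']
      have inner : ∀ a, ∑ b, ∑ c, Pac a c * Pbc b c / Pc c = ∑ c, Pac a c := by
        intro a; rw [Finset.sum_comm]; exact Finset.sum_congr rfl fun c _ => e a c
      simp_rw [inner]
      rw [Finset.sum_comm]
      simp_rw [hac, hcsum]
    simp only [hG]
    rw [Finset.sum_sub_distrib, hG1, hG2, sub_self]
  have hle : ∑ x : α × β × γ, F x ≤ ∑ x : α × β × γ, G x := by
    rw [hsumF, hsumG]; exact h
  have hge : ∑ x : α × β × γ, G x ≤ ∑ x : α × β × γ, F x :=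
    Finset.sum_le_sum fun x _ => (key x).1
  have heq : ∑ x : α × β × γ, G x = ∑ x : α × β × γ, F x := le_antisymm hge hle
  have hpt := (Finset.sum_eq_sum_iff_of_le (fun x _ => (key x).1)).mp heq
  intro a b c
  exact (key (a, b, c)).2 ((hpt (a, b, c) (Finset.mem_univ _)).symm)

end CMI2

section DAG
variable {d : ℕ}

def evt (T : Finset (Fin d)) (x : Fin d → Bool) : Finset (Fin d → Bool) :=
  Finset.univ.filter (fun y => ∀ j ∈ T, y j = x j)

lemma marg_prod (p : (Fin d → Bool) → ℝ) (E : Fin d → Fin d → Prop)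
    (hacyc : ∀ i, ¬ Relation.TransGen E i i)
    (f : Fin d → Bool → (Fin d → Bool) → ℝ)
    (hf1 : ∀ k x, ∑ b, f k b x = 1)
    (hfdep : ∀ k b x y, (∀ j, E j k → x j = y j) → f k b x = f k b y)
    (hfp : ∀ x, p x = ∏ k, f k (x k) x) :
    ∀ (T : Finset (Fin d)), (∀ i j, E i j → j ∈ T → i ∈ T) →
      ∀ x, ∑ y ∈ evt T x, p y = ∏ j ∈ T, f j (x j) x := by
  classical
  have hwf : WellFounded (Relation.TransGen E) := by
    haveI : IsTrans (Fin d) (Relation.TransGen E) := ⟨fun _ _ _ => Relation.TransGen.trans⟩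
    haveI : IsIrrefl (Fin d) (Relation.TransGen E) := ⟨hacyc⟩
    exact Finite.wellFounded_of_trans_of_irrefl _
  suffices H : ∀ n (T : Finset (Fin d)), Tᶜ.card = n →
      (∀ i j, E i j → j ∈ T → i ∈ T) → ∀ x, ∑ y ∈ evt T x, p y = ∏ j ∈ T, f j (x j) x by
    exact fun T hT x => H _ T rfl hT x
  intro n
  induction n with
  | zero =>
    intro T hcard _ x
    have hTu : T = Finset.univ := by
      have : Tᶜ = ∅ := Finset.card_eq_zero.mp hcard
      rwa [Finset.compl_eq_empty_iff] at this
    subst hTu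
    have : evt (Finset.univ : Finset (Fin d)) x = {x} := by
      ext y
      simp only [evt, Finset.mem_filter, Finset.mem_univ, true_and, Finset.mem_singleton]
      constructor
      · intro h; funext j; exact h j trivial
      · intro h j _; rw [h]
    rw [this, Finset.sum_singleton, hfp x]
  | succ n ih =>
    intro T hcard hT x
    have hne : (↑Tᶜ : Set (Fin d)).Nonempty := by
      rw [Finset.coe_nonempty]
      exact Finset.card_pos.mp (by rw [hcard]; exact Nat.succ_pos n)
    obtain ⟨m₀, hm₀s, hm₀min⟩ := hwf.has_min (↑Tᶜ : Set (Fin d)) hne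
    rw [Finset.mem_coe, Finset.mem_compl] at hm₀s
    have hpar : ∀ i, E i m₀ → i ∈ T := by
      intro i hi
      by_contra hiT
      exact hm₀min i (by rwa [Finset.mem_coe, Finset.mem_compl]) (Relation.TransGen.single hi)
    set T' := insert m₀ T with hT'
    have hT'anc : ∀ i j, E i j → j ∈ T' → i ∈ T' := by
      intro i j hij hj
      rcases Finset.mem_insert.mp hj with h | h
      · subst h; exact Finset.mem_insert_of_mem (hpar i hij)
      · exact Finset.mem_insert_of_mem (hT i j hij h)
    have hcard' : T'ᶜ.card = n := by
      rw [hT', Finset.compl_insert, Finset.card_erase_of_mem (Finset.mem_compl.mpr hm₀s), hcard]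
      omega
    have hfe : ∀ b, (evt T x).filter (fun y => y m₀ = b) = evt T' (Function.update x m₀ b) := by
      intro b
      ext y
      simp only [evt, Finset.mem_filter, Finset.mem_univ, true_and, hT', Finset.mem_insert]
      constructor
      · rintro ⟨h1, h2⟩ j hj
        rcases hj with h | h
        · subst h; rw [h2, Function.update_self]
        · rw [Function.update_of_ne (show j ≠ m₀ by rintro rfl; exact hm₀s h) _ x]
          exact h1 j h
      · intro h
        constructor
        · intro j hj
          have := h j (Or.inr hj)
          rwa [Function.update_of_ne (show j ≠ m₀ by rintro rfl; exact hm₀s hj) _ x] at this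
        · have := h m₀ (Or.inl rfl)
          rwa [Function.update_self] at this
    have hpiece : ∀ b, ∑ y ∈ evt T' (Function.update x m₀ b), p y
        = f m₀ b x * ∏ j ∈ T, f j (x j) x := by
      intro b
      rw [ih T' hcard' hT'anc (Function.update x m₀ b)]
      rw [hT', Finset.prod_insert hm₀s]
      congr 1
      · rw [Function.update_self]
        exact hfdep m₀ b _ x (fun j hj =>
          Function.update_of_ne (show j ≠ m₀ by rintro rfl; exact hm₀s (hpar j hj)) _ x)
      · refine Finset.prod_congr rfl fun j hj => ?_
        rw [Function.update_of_ne (show j ≠ m₀ by rintro rfl; exact hm₀s hj) _ x]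
        exact hfdep j (x j) _ x (fun i hi =>
          Function.update_of_ne (show i ≠ m₀ by rintro rfl; exact hm₀s (hT i j hi hj)) _ x)
    have hsplit := Finset.sum_filter_add_sum_filter_not (evt T x) (fun y => y m₀ = true) p
    have hnotf : (evt T x).filter (fun y => ¬ y m₀ = true) =
        (evt T x).filter (fun y => y m₀ = false) := by
      apply Finset.filter_congr
      intro y _
      simp
    rw [hnotf, hfe true, hfe false, hpiece true, hpiece false] at hsplit
    rw [← hsplit]
    have := hf1 m₀ x
    rw [Fintype.sum_bool] at this
    rw [← add_mul, this, one_mul]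

end DAG

/-- If `G` (edge relation `E`) is a minimal I-map of a strictly
positive distribution on `{0,1}^d`, then for every node `k` and every ancestral set
`A` with `pa(k) \ A ≠ ∅`, we have I(X_k; pa(k) | A) > 0. -/
theorem minimal_imap_parent_condMI_pos
    {d : ℕ} (p : (Fin d → Bool) → ℝ)
    (hpos : ∀ x, 0 < p x) (hsum : ∑ x, p x = 1)
    (E : Fin d → Fin d → Prop) (hacyc : ∀ i, ¬ Relation.TransGen E i i)
    (hfact : Factorizes E p)
    (hmin : ∀ i k, E i k → ¬ Factorizes (fun a b => E a b ∧ ¬(a = i ∧ b = k)) p)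
    (k : Fin d) (A : Finset (Fin d))
    (hanc : ∀ i j, E i j → j ∈ A → i ∈ A)
    (hpa : ∃ i, E i k ∧ i ∉ A) :
    0 < condMI p (fun x => x k) (restr (β := Bool) (paF E k)) (restr A) := by
  classical
  by_contra hcon
  have hle : condMI p (fun x => x k) (restr (β := Bool) (paF E k)) (restr A) ≤ 0 :=
    not_lt.mp hcon
  obtain ⟨f, hf0, hf1, hfdep, hfp⟩ := hfact
  obtain ⟨i, hik, hiA⟩ := hpa
  set pa := paF E k with hpa'
  have hEpa : ∀ j, j ∈ pa ↔ E j k := fun j => by simp [hpa', paF]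
  have hkA : k ∉ A := fun hk => hiA (hanc i k hik hk)
  -- the ancestral closure S0 of A ∪ pa, and S1 = S0 ∪ {k}
  set S0 : Finset (Fin d) := A ∪ Finset.univ.filter
      (fun j => ∃ m, E m k ∧ Relation.ReflTransGen E j m) with hS0
  have hpaS0 : ∀ j, E j k → j ∈ S0 := fun j hj =>
    Finset.mem_union_right _ (Finset.mem_filter.mpr
      ⟨Finset.mem_univ _, j, hj, Relation.ReflTransGen.refl⟩)
  have hAS0 : A ⊆ S0 := Finset.subset_union_left
  have hkS0 : k ∉ S0 := by
    intro hk
    rcases Finset.mem_union.mp hk with h | h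
    · exact hkA h
    · obtain ⟨-, m, hmk, hkm⟩ := Finset.mem_filter.mp h
      exact hacyc k (Relation.TransGen.tail' hkm hmk)
  have hS0anc : ∀ i' j, E i' j → j ∈ S0 → i' ∈ S0 := by
    intro i' j hij hj
    rcases Finset.mem_union.mp hj with h | h
    · exact hAS0 (hanc i' j hij h)
    · obtain ⟨-, m, hmk, hjm⟩ := Finset.mem_filter.mp h
      exact Finset.mem_union_right _ (Finset.mem_filter.mpr
        ⟨Finset.mem_univ _, m, hmk, Relation.ReflTransGen.head hij hjm⟩)
  set S1 := insert k S0 with hS1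
  have hS1anc : ∀ i' j, E i' j → j ∈ S1 → i' ∈ S1 := by
    intro i' j hij hj
    rcases Finset.mem_insert.mp hj with h | h
    · subst h; exact Finset.mem_insert_of_mem (hpaS0 i' hij)
    · exact Finset.mem_insert_of_mem (hS0anc i' j hij h)
  have hmarg := marg_prod p E hacyc f hf1 hfdep hfp
  -- prE of restriction events as finset sums
  have hre : ∀ (B : Finset (Fin d)) (ω z : Fin d → Bool),
      restr (β := Bool) B ω = restr B z ↔ ∀ j ∈ B, ω j = z j := by
    intro B ω z
    constructor
    · intro h j hj; exact congrFun h ⟨j, hj⟩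
    · intro h; funext j; exact h j.1 j.2
  have hev1 : ∀ (z y : Fin d → Bool),
      y ∈ ({ω : Fin d → Bool |
        restr (β := Bool) pa ω = restr pa z ∧ restr A ω = restr A z} : Set (Fin d → Bool))
      ↔ y ∈ evt (pa ∪ A) z := by
    intro z y
    simp only [Set.mem_setOf_eq, evt, Finset.mem_filter, Finset.mem_univ, true_and,
      Finset.mem_union, hre]
    constructor
    · rintro ⟨h1, h2⟩ j hj
      rcases hj with h | h
      · exact h1 j h
      · exact h2 j h
    · intro h
      exact ⟨fun j hj => h j (Or.inl hj), fun j hj => h j (Or.inr hj)⟩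
  have hev2 : ∀ (a : Bool) (z y : Fin d → Bool),
      y ∈ ({ω : Fin d → Bool | ω k = a ∧
        restr (β := Bool) pa ω = restr pa z ∧ restr A ω = restr A z} : Set (Fin d → Bool))
      ↔ y ∈ (evt (pa ∪ A) z).filter (fun y => y k = a) := by
    intro a z y
    simp only [Set.mem_setOf_eq, evt, Finset.mem_filter, Finset.mem_univ, true_and,
      Finset.mem_union, hre]
    constructor
    · rintro ⟨h0, h1, h2⟩
      refine ⟨?_, h0⟩
      intro j hj
      rcases hj with h | h
      · exact h1 j h
      · exact h2 j h
    · rintro ⟨h, h0⟩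
      exact ⟨h0, fun j hj => h j (Or.inl hj), fun j hj => h j (Or.inr hj)⟩
  -- key factorization identity C1
  have hC1 : ∀ (a : Bool) (z : Fin d → Bool),
      prE p {ω : Fin d → Bool | ω k = a ∧
          restr (β := Bool) pa ω = restr pa z ∧ restr A ω = restr A z}
        = f k a z * prE p {ω : Fin d → Bool |
            restr (β := Bool) pa ω = restr pa z ∧ restr A ω = restr A z} := by
    intro a z
    rw [prE_eq_sum p _ _ (hev2 a z), prE_eq_sum p _ _ (hev1 z)]
    set g : (Fin d → Bool) → (Fin d → Bool) := fun y j => if j ∈ S0 then y j else false with hg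
    rw [← Finset.sum_fiberwise_of_maps_to (g := g) (t := Finset.univ)
      (fun x _ => Finset.mem_univ (g x)) p,
      ← Finset.sum_fiberwise_of_maps_to (g := g) (t := Finset.univ) (s := evt (pa ∪ A) z)
      (fun x _ => Finset.mem_univ (g x)) p, Finset.mul_sum]
    refine Finset.sum_congr rfl fun w _ => ?_
    have hcomm : ((evt (pa ∪ A) z).filter (fun y => y k = a)).filter (fun y => g y = w)
        = ((evt (pa ∪ A) z).filter (fun y => g y = w)).filter (fun y => y k = a) := by
      rw [Finset.filter_filter, Finset.filter_filter]
      exact Finset.filter_congr fun y _ => by tauto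
    rw [hcomm]
    set s_w := (evt (pa ∪ A) z).filter (fun y => g y = w) with hsw_def
    by_cases hw : s_w.Nonempty
    · obtain ⟨y₀, hy₀⟩ := hw
      have hy₀evt : ∀ j ∈ pa ∪ A, y₀ j = z j := by
        have := (Finset.mem_filter.mp hy₀).1
        simpa [evt] using this
      have hy₀g : g y₀ = w := (Finset.mem_filter.mp hy₀).2
      have hsw : s_w = evt S0 y₀ := by
        ext y
        simp only [hsw_def, Finset.mem_filter, evt, Finset.mem_univ, true_and]
        constructor
        · rintro ⟨h1, h2⟩ j hj
          have : g y j = g y₀ j := by rw [h2, hy₀g]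
          simpa [hg, hj] using this
        · intro h
          constructor
          · intro j hj
            have hjS0 : j ∈ S0 := by
              rcases Finset.mem_union.mp hj with h' | h'
              · exact hpaS0 j ((hEpa j).mp h')
              · exact hAS0 h'
            rw [h j hjS0]
            exact hy₀evt j hj
          · rw [← hy₀g]
            funext j
            simp only [hg]
            split
            · exact h j ‹_›
            · rfl
      have hkne : ∀ j ∈ S0, j ≠ k := fun j hj hjk => hkS0 (hjk ▸ hj)
      have hswk : s_w.filter (fun y => y k = a) = evt S1 (Function.update y₀ k a) := by
        rw [hsw]
        ext y
        simp only [Finset.mem_filter, evt, Finset.mem_univ, true_and, hS1,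
          Finset.mem_insert]
        constructor
        · rintro ⟨h1, h2⟩ j hj
          rcases hj with h | h
          · subst h; rw [h2, Function.update_self]
          · rw [Function.update_of_ne (hkne j h) _ y₀]
            exact h1 j h
        · intro h
          constructor
          · intro j hj
            have := h j (Or.inr hj)
            rwa [Function.update_of_ne (hkne j hj) _ y₀] at this
          · have := h k (Or.inl rfl)
            rwa [Function.update_self] at this
      rw [hswk, hsw, hmarg S1 hS1anc _, hmarg S0 hS0anc _]
      rw [hS1, Finset.prod_insert hkS0, Function.update_self]
      have h2 : ∏ j ∈ S0, f j (Function.update y₀ k a j) (Function.update y₀ k a)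
          = ∏ j ∈ S0, f j (y₀ j) y₀ := by
        refine Finset.prod_congr rfl fun j hj => ?_
        rw [Function.update_of_ne (hkne j hj) _ y₀]
        exact hfdep j (y₀ j) _ y₀ (fun j' hj' =>
          Function.update_of_ne (hkne j' (hS0anc j' j hj' hj)) _ y₀)
      have h3 : f k a (Function.update y₀ k a) = f k a z := by
        have hkk : k ∉ pa := fun h => hacyc k (Relation.TransGen.single ((hEpa k).mp h))
        have e1 : f k a (Function.update y₀ k a) = f k a y₀ :=
          hfdep k a _ y₀ (fun j hj =>
            Function.update_of_ne
              (show j ≠ k from fun hjk => hkk (by rw [← hjk]; exact (hEpa j).mpr hj)) _ y₀)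
        have e2 : f k a y₀ = f k a z :=
          hfdep k a y₀ z (fun j hj =>
            hy₀evt j (Finset.mem_union_left _ ((hEpa j).mpr hj)))
        rw [e1, e2]
      rw [h2, h3]
    · have hs0 : s_w = ∅ := Finset.not_nonempty_iff_eq_empty.mp hw
      rw [hs0]
      simp
  -- positivity of events containing a point
  have hPbc_pos : ∀ z : Fin d → Bool, 0 < prE p {ω : Fin d → Bool |
      restr (β := Bool) pa ω = restr pa z ∧ restr A ω = restr A z} :=
    fun z => prE_pos p hpos ⟨z, ⟨rfl, rfl⟩⟩
  have hPc_pos : ∀ z : Fin d → Bool,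
      0 < prE p {ω : Fin d → Bool | restr (β := Bool) A ω = restr A z} :=
    fun z => prE_pos p hpos ⟨z, rfl⟩
  -- conditional independence from condMI ≤ 0
  have hZ : ∀ c : (↥A → Bool), ∃ ω : Fin d → Bool, restr (β := Bool) A ω = c := by
    intro c
    refine ⟨fun j => if h : j ∈ A then c ⟨j, h⟩ else false, ?_⟩
    funext j
    simp only [restr]
    rw [dif_pos j.2]
  have hci := condMI_le_zero_ci p (fun x => x k) (restr (β := Bool) pa) (restr A)
    hpos hsum hZ hle
  -- key identity : f k a z * P(X_A = z_A) = P(X_k = a, X_A = z_A)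
  have hkey : ∀ (a : Bool) (z : Fin d → Bool),
      f k a z * prE p {ω : Fin d → Bool | restr (β := Bool) A ω = restr A z}
        = prE p {ω : Fin d → Bool | ω k = a ∧ restr (β := Bool) A ω = restr A z} := by
    intro a z
    have h1 := hci a (restr pa z) (restr A z)
    rw [hC1 a z] at h1
    have h2 : f k a z * prE p {ω : Fin d → Bool | restr (β := Bool) A ω = restr A z}
        * prE p {ω : Fin d → Bool |
            restr (β := Bool) pa ω = restr pa z ∧ restr A ω = restr A z}
        = prE p {ω : Fin d → Bool | ω k = a ∧ restr (β := Bool) A ω = restr A z}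
        * prE p {ω : Fin d → Bool |
            restr (β := Bool) pa ω = restr pa z ∧ restr A ω = restr A z} := by
      linear_combination h1
    exact mul_right_cancel₀ (hPbc_pos z).ne' h2
  -- invariance of the kernel in coordinates outside pa ∩ A
  have hinv : ∀ (a : Bool) (x y : Fin d → Bool),
      (∀ j ∈ pa ∩ A, x j = y j) → f k a x = f k a y := by
    intro a x y hxy
    set z : Fin d → Bool := fun j => if j ∈ pa then x j else y j with hz
    have h1 : f k a z = f k a x :=
      hfdep k a z x (fun j hj => by simp [hz, (hEpa j).mpr hj])
    have h2 : restr (β := Bool) A z = restr A y := by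
      funext j
      simp only [restr, hz]
      split
      · exact hxy j.1 (Finset.mem_inter.mpr ⟨‹_›, j.2⟩)
      · rfl
    have h3 := hkey a z
    rw [h2] at h3
    have h4 := hkey a y
    have h5 := h3.trans h4.symm
    have h6 := mul_right_cancel₀ (hPc_pos y).ne' h5
    rw [← h1, h6]
  -- build the factorization with the edge i → k removed
  apply hmin i k hik
  set patch : (Fin d → Bool) → (Fin d → Bool) :=
    fun x j => if j ∈ pa ∩ A then x j else false with hpatch
  refine ⟨fun j => if j = k then (fun b x => f k b (patch x)) else f j, ?_, ?_, ?_, ?_⟩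
  · intro j b x
    by_cases hj : j = k
    · simp only [hj, if_pos rfl]; exact hf0 k b (patch x)
    · simp only [if_neg hj]; exact hf0 j b x
  · intro j x
    by_cases hj : j = k
    · simp only [hj, if_pos rfl]; exact hf1 k (patch x)
    · simp only [if_neg hj]; exact hf1 j x
  · intro j b x y hdep
    by_cases hj : j = k
    · simp only [if_pos hj]
      have hpxy : patch x = patch y := by
        funext j'
        simp only [hpatch]
        split
        · rename_i hj'
          obtain ⟨hj'pa, hj'A⟩ := Finset.mem_inter.mp hj'
          exact hdep j' ⟨by rw [hj]; exact (hEpa j').mp hj'pa,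
            fun hc => hiA (by rw [← hc.1]; exact hj'A)⟩
        · rfl
      show f k b (patch x) = f k b (patch y)
      rw [hpxy]
    · simp only [if_neg hj]
      exact hfdep j b x y (fun j' hj' => hdep j' ⟨hj', fun hc => hj hc.2⟩)
  · intro x
    rw [hfp x]
    refine Finset.prod_congr rfl fun j _ => ?_
    by_cases hj : j = k
    · simp only [if_pos hj, hj]
      show f k (x k) x = f k (x k) (patch x)
      exact hinv (x k) x (patch x) (fun j' hj' => (if_pos hj').symm)
    · simp only [if_neg hj]

end
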